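/- arXiv:1503.03210 — 3 statements merged into one kernel-verified Lean document; each statement's English description precedes it below -/
import Mathlib

section
/- Let U be a real p×q matrix, let r be a positive integer with r ≤ min(p,q), and let I ⊆ {1,…,p} and J ⊆ {1,…,q} be index sets of cardinality r such that the r×r submatrix Û = U(I,J) is invertible and |det U(I,J)| ≥ |det U(I′,J′)| for every pair of index sets I′ ⊆ {1,…,p}, J′ ⊆ {1,…,q} of cardinality r. Define the cross approximation Ũ = U(:,J) · Û⁻¹ · U(I,:), where U(:,J) is the p×r matrix of the columns of U indexed by J and U(I,:) is the r×q matrix of the rows of U indexed by I. Then for every real p×q matrix V with rank(V) ≤ r one has max_{i,j} |U(i,j) − Ũ(i,j)| ≤ (r+1)·‖U − V‖₂, where ‖·‖₂ denotes the spectral (ℓ₂ operator) norm; consequently ‖U − Ũ‖_C ≤ (r+1)·min_{rank(V)≤r} ‖U − V‖₂ in the Chebyshev norm ‖X‖_C = max_{i,j}|X(i,j)|. -/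
section Helpers

lemma snoc_inj {n : ℕ} {α : Type*} {f : Fin n → α} {a : α}
    (hf : Function.Injective f) (ha : ∀ m, f m ≠ a) :
    Function.Injective (Fin.snoc f a : Fin (n+1) → α) := by
  intro x y hxy
  induction x using Fin.lastCases with
  | last =>
    induction y using Fin.lastCases with
    | last => rfl
    | cast y =>
      simp only [Fin.snoc_last, Fin.snoc_castSucc] at hxy
      exact absurd hxy.symm (ha y)
  | cast x =>
    induction y using Fin.lastCases with
    | last =>
      simp only [Fin.snoc_last, Fin.snoc_castSucc] at hxy
      exact absurd hxy (ha x)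
    | cast y =>
      simp only [Fin.snoc_castSucc] at hxy
      exact congrArg Fin.castSucc (hf hxy)

end Helpers

/-- The spectral (ℓ₂ operator) norm of a real `p×q` matrix. -/
noncomputable def matSpectralNorm {p q : ℕ} (A : Matrix (Fin p) (Fin q) ℝ) : ℝ :=
  ‖LinearMap.toContinuousLinearMap (Matrix.toEuclideanLin A)‖

section Helpers2

lemma matSpectralNorm_nonneg {p q : ℕ} (A : Matrix (Fin p) (Fin q) ℝ) : 0 ≤ matSpectralNorm A :=
  norm_nonneg _

lemma sum_sq_mulVec_le {p q : ℕ} (A : Matrix (Fin p) (Fin q) ℝ) (y : Fin q → ℝ) :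
    ∑ i, (A.mulVec y i)^2 ≤ (matSpectralNorm A)^2 * ∑ j, (y j)^2 := by
  set v : EuclideanSpace ℝ (Fin q) := (WithLp.equiv 2 _).symm y with hv
  have h := (LinearMap.toContinuousLinearMap (Matrix.toEuclideanLin A)).le_opNorm v
  have h1 : ‖LinearMap.toContinuousLinearMap (Matrix.toEuclideanLin A) v‖
      = Real.sqrt (∑ i, (A.mulVec y i)^2) := by
    rw [LinearMap.coe_toContinuousLinearMap']
    rw [hv, WithLp.equiv_symm_apply, Matrix.toEuclideanLin_apply_piLp_toLp]
    rw [EuclideanSpace.norm_eq]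
    congr 1
    refine Finset.sum_congr rfl fun i _ => ?_
    rw [PiLp.toLp_apply, Real.norm_eq_abs, sq_abs]
  have h2 : ‖v‖ = Real.sqrt (∑ j, (y j)^2) := by
    rw [EuclideanSpace.norm_eq]
    congr 1
    refine Finset.sum_congr rfl fun j _ => ?_
    rw [hv, WithLp.equiv_symm_apply, PiLp.toLp_apply, Real.norm_eq_abs, sq_abs]
  rw [h1, h2] at h
  have h3 : Real.sqrt (∑ i, (A.mulVec y i)^2) ^ 2 ≤ (matSpectralNorm A * Real.sqrt (∑ j, (y j)^2))^2 :=
    pow_le_pow_left₀ (Real.sqrt_nonneg _) h 2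
  rw [Real.sq_sqrt (by positivity), mul_pow, Real.sq_sqrt (by positivity)] at h3
  exact h3

lemma submatrix_col_eq_mul {p q n : ℕ} (A : Matrix (Fin p) (Fin q) ℝ) (J' : Fin n → Fin q) :
    A.submatrix id J' = A * (1 : Matrix (Fin q) (Fin q) ℝ).submatrix id J' := by
  ext i a
  rw [Matrix.mul_apply]
  simp only [Matrix.submatrix_apply, Matrix.one_apply, id_eq]
  rw [Finset.sum_eq_single (J' a)] <;> simp +contextual

lemma submatrix_row_eq_mul {p q n : ℕ} (A : Matrix (Fin p) (Fin q) ℝ) (I' : Fin n → Fin p) :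
    A.submatrix I' id = (1 : Matrix (Fin p) (Fin p) ℝ).submatrix I' id * A := by
  ext a j
  rw [Matrix.mul_apply]
  simp only [Matrix.submatrix_apply, Matrix.one_apply, id_eq]
  rw [Finset.sum_eq_single (I' a)]
  · simp
  · intro b _ hb
    simp [Matrix.one_apply, Ne.symm hb]
  · simp

lemma rank_submatrix_le' {p q n : ℕ} (A : Matrix (Fin p) (Fin q) ℝ)
    (I' : Fin n → Fin p) (J' : Fin n → Fin q) :
    (A.submatrix I' J').rank ≤ A.rank := by
  have : A.submatrix I' J' = (1 : Matrix (Fin p) (Fin p) ℝ).submatrix I' id *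
      (A * (1 : Matrix (Fin q) (Fin q) ℝ).submatrix id J') := by
    rw [← submatrix_col_eq_mul]
    have := submatrix_row_eq_mul (A.submatrix id J') I'
    simpa using this
  rw [this]
  exact (Matrix.rank_mul_le_right _ _).trans (Matrix.rank_mul_le_left _ _)

lemma exists_ker_vec {n : ℕ} (W : Matrix (Fin (n+1)) (Fin (n+1)) ℝ) (hW : W.rank ≤ n) :
    ∃ x : Fin (n+1) → ℝ, x ≠ 0 ∧ W.mulVec x = 0 := by
  by_contra h
  push_neg at h
  have hinj : Function.Injective W.mulVecLin := by
    rw [← LinearMap.ker_eq_bot]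
    by_contra hk
    obtain ⟨x, hx, hx0⟩ := (Submodule.ne_bot_iff _).mp hk
    exact h x hx0 hx
  have := LinearMap.finrank_range_of_inj hinj
  rw [Matrix.rank] at hW
  rw [this] at hW
  simp at hW

lemma adjugate_eq_minor {n : ℕ} (B : Matrix (Fin (n+1)) (Fin (n+1)) ℝ) (k l : Fin (n+1)) :
    |B.adjugate k l| = |(B.submatrix l.succAbove k.succAbove).det| := by
  rw [Matrix.adjugate_apply]
  rw [Matrix.det_succ_row _ l]
  rw [Finset.sum_eq_single k]
  · rw [Matrix.updateRow_self]
    simp only [Pi.single_eq_same, mul_one]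
    have hsub : (B.updateRow l (Pi.single k 1)).submatrix l.succAbove k.succAbove
        = B.submatrix l.succAbove k.succAbove := by
      ext m m'
      simp only [Matrix.submatrix_apply]
      rw [Matrix.updateRow_ne (Fin.succAbove_ne l m)]
    rw [hsub, abs_mul, abs_pow, abs_neg, abs_one, one_pow, one_mul]
  · intro b _ hb
    rw [Matrix.updateRow_self, Pi.single_eq_of_ne hb]
    ring
  · simp

lemma det_snoc_eq {p q r : ℕ} (U : Matrix (Fin p) (Fin q) ℝ)
    (I : Fin r → Fin p) (J : Fin r → Fin q) (i : Fin p) (j : Fin q)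
    (hinv : IsUnit (U.submatrix I J)) :
    (U.submatrix (Fin.snoc I i) (Fin.snoc J j)).det =
      (U.submatrix I J).det *
        (U i j - (U.submatrix id J * (U.submatrix I J)⁻¹ * U.submatrix I id) i j) := by
  haveI : Invertible (U.submatrix I J) := hinv.nonempty_invertible.some
  set B := U.submatrix (Fin.snoc I i) (Fin.snoc J j) with hB
  have hdet : B.det = (Matrix.fromBlocks (U.submatrix I J)
      (Matrix.of fun (a : Fin r) (_ : Fin 1) => U (I a) j)
      (Matrix.of fun (_ : Fin 1) (b : Fin r) => U i (J b))
      (Matrix.of fun (_ : Fin 1) (_ : Fin 1) => U i j)).det := by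
    rw [← Matrix.det_submatrix_equiv_self finSumFinEquiv B]
    congr 1
    have hcast : ∀ (a : Fin r), (Fin.castAdd 1 a) = Fin.castSucc a := fun a => rfl
    have hnat : ∀ (b : Fin 1), (Fin.natAdd r b) = Fin.last r := by
      intro b
      have : (b : ℕ) = 0 := by omega
      simp [Fin.ext_iff, this]
    ext a b
    cases a with
    | inl a =>
      cases b with
      | inl b => simp [hB, hcast, Fin.snoc_castSucc]
      | inr b => simp [hB, hcast, hnat, Fin.snoc_castSucc, Fin.snoc_last]
    | inr a =>
      cases b with
      | inl b => simp [hB, hcast, hnat, Fin.snoc_castSucc, Fin.snoc_last]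
      | inr b => simp [hB, hnat, Fin.snoc_last]
  rw [hdet, Matrix.det_fromBlocks₁₁]
  congr 1
  rw [Matrix.det_fin_one, Matrix.invOf_eq_nonsing_inv]
  simp only [Matrix.sub_apply, Matrix.of_apply, Matrix.mul_apply, Matrix.submatrix_apply, id_eq]

lemma cross_exact_row {p q r : ℕ} (U : Matrix (Fin p) (Fin q) ℝ)
    (I : Fin r → Fin p) (J : Fin r → Fin q) (hinv : IsUnit (U.submatrix I J))
    (k : Fin r) (j : Fin q) :
    (U.submatrix id J * (U.submatrix I J)⁻¹ * U.submatrix I id) (I k) j = U (I k) j := by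
  have h1 : (U.submatrix id J * (U.submatrix I J)⁻¹) (I k)
      = ((U.submatrix I J) * (U.submatrix I J)⁻¹) k := by
    funext b
    rw [Matrix.mul_apply, Matrix.mul_apply]
    rfl
  rw [Matrix.mul_apply]
  have h2 : ∀ b, (U.submatrix id J * (U.submatrix I J)⁻¹ ) (I k) b
      = (1 : Matrix (Fin r) (Fin r) ℝ) k b := by
    intro b
    rw [h1, Matrix.mul_nonsing_inv _ ((Matrix.isUnit_iff_isUnit_det _).mp hinv)]
  simp only [h2]
  rw [Finset.sum_eq_single k]
  · simp
  · intro b _ hb; simp [Matrix.one_apply, Ne.symm hb]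
  · simp

lemma cross_exact_col {p q r : ℕ} (U : Matrix (Fin p) (Fin q) ℝ)
    (I : Fin r → Fin p) (J : Fin r → Fin q) (hinv : IsUnit (U.submatrix I J))
    (i : Fin p) (k : Fin r) :
    (U.submatrix id J * (U.submatrix I J)⁻¹ * U.submatrix I id) i (J k) = U i (J k) := by
  have h1 : ∀ a, ((U.submatrix I J)⁻¹ * U.submatrix I id) a (J k)
      = (1 : Matrix (Fin r) (Fin r) ℝ) a k := by
    intro a
    have : ((U.submatrix I J)⁻¹ * U.submatrix I id) a (J k)
        = ((U.submatrix I J)⁻¹ * (U.submatrix I J)) a k := by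
      rw [Matrix.mul_apply, Matrix.mul_apply]
      rfl
    rw [this, Matrix.nonsing_inv_mul _ ((Matrix.isUnit_iff_isUnit_det _).mp hinv)]
  rw [Matrix.mul_assoc, Matrix.mul_apply]
  simp only [h1]
  rw [Finset.sum_eq_single k]
  · simp
  · intro b _ hb; simp [Matrix.one_apply, hb]
  · simp

end Helpers2

/-- Maximum volume principle: if the `r×r` submatrix `Û = U(I,J)` is
invertible and has maximal determinant modulus among all `r×r` submatrices of
`U`, then the cross approximation `Ũ = U(:,J) Û⁻¹ U(I,:)` satisfies
`|U(i,j) − Ũ(i,j)| ≤ (r+1)‖U − V‖₂` for every matrix `V` of rank at most `r`,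
i.e. `‖U − Ũ‖_C ≤ (r+1) min_{rank V ≤ r} ‖U − V‖₂` in the Chebyshev norm. -/
theorem maxvol_cross_approximation {p q r : ℕ}
    (hr : 0 < r) (hrp : r ≤ p) (hrq : r ≤ q)
    (U : Matrix (Fin p) (Fin q) ℝ)
    (I : Fin r → Fin p) (J : Fin r → Fin q)
    (hI : Function.Injective I) (hJ : Function.Injective J)
    (hinv : IsUnit (U.submatrix I J))
    (hmaxvol : ∀ (I' : Fin r → Fin p) (J' : Fin r → Fin q),
      Function.Injective I' → Function.Injective J' →
      |(U.submatrix I' J').det| ≤ |(U.submatrix I J).det|)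
    (V : Matrix (Fin p) (Fin q) ℝ) (hV : V.rank ≤ r) :
    ∀ (i : Fin p) (j : Fin q),
      |U i j - (U.submatrix id J * (U.submatrix I J)⁻¹ * U.submatrix I id) i j|
        ≤ ((r : ℝ) + 1) * matSpectralNorm (U - V) := by
  intro i j
  set s := matSpectralNorm (U - V) with hs
  have hs0 : 0 ≤ s := matSpectralNorm_nonneg _
  have hrhs : 0 ≤ ((r : ℝ) + 1) * s := by positivity
  by_cases hi : ∃ k, I k = i
  · obtain ⟨k, rfl⟩ := hi
    rw [cross_exact_row U I J hinv k j]
    simpa using hrhs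
  by_cases hj : ∃ k, J k = j
  · obtain ⟨k, rfl⟩ := hj
    rw [cross_exact_col U I J hinv i k]
    simpa using hrhs
  push_neg at hi hj
  set E := U i j - (U.submatrix id J * (U.submatrix I J)⁻¹ * U.submatrix I id) i j with hE
  rcases eq_or_ne E 0 with hE0 | hE0
  · rw [hE0, abs_zero]; exact hrhs
  have hEpos : 0 < |E| := abs_pos.mpr hE0
  -- extended index maps
  set I' : Fin (r+1) → Fin p := Fin.snoc I i with hI'def
  set J' : Fin (r+1) → Fin q := Fin.snoc J j with hJ'def
  have hI' : Function.Injective I' := snoc_inj hI hi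
  have hJ' : Function.Injective J' := snoc_inj hJ hj
  set B := U.submatrix I' J' with hBdef
  have hdetB : B.det = (U.submatrix I J).det * E := det_snoc_eq U I J i j hinv
  have hdetU : (U.submatrix I J).det ≠ 0 := by
    have := (Matrix.isUnit_iff_isUnit_det _).mp hinv
    exact this.ne_zero
  have hdetB0 : B.det ≠ 0 := by
    rw [hdetB]; exact mul_ne_zero hdetU hE0
  have habsB : |B.det| = |(U.submatrix I J).det| * |E| := by rw [hdetB, abs_mul]
  -- bound on entries of B⁻¹
  have hBinv : ∀ k l, |B⁻¹ k l| ≤ |E|⁻¹ := by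
    intro k l
    have hadj : |B.adjugate k l| ≤ |(U.submatrix I J).det| := by
      rw [adjugate_eq_minor, hBdef, Matrix.submatrix_submatrix]
      exact hmaxvol _ _ (hI'.comp Fin.succAbove_right_injective)
        (hJ'.comp Fin.succAbove_right_injective)
    have hdU : 0 < |(U.submatrix I J).det| := abs_pos.mpr hdetU
    rw [Matrix.inv_def, Matrix.smul_apply, smul_eq_mul, abs_mul, Ring.inverse_eq_inv',
      abs_inv, habsB, mul_inv]
    calc |(U.submatrix I J).det|⁻¹ * |E|⁻¹ * |B.adjugate k l|
        ≤ |(U.submatrix I J).det|⁻¹ * |E|⁻¹ * |(U.submatrix I J).det| := by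
          apply mul_le_mul_of_nonneg_left hadj (by positivity)
      _ = |E|⁻¹ := by field_simp
  -- kernel vector of the submatrix of V
  set W := V.submatrix I' J' with hWdef
  have hWr : W.rank ≤ r := (rank_submatrix_le' V I' J').trans hV
  obtain ⟨x, hx0, hWx⟩ := exists_ker_vec W hWr
  have hBW : (U - V).submatrix I' J' = B - W := by
    ext a b; simp [hBdef, hWdef, Matrix.sub_apply]
  have hBx : B.mulVec x = ((U - V).submatrix I' J').mulVec x := by
    rw [hBW, Matrix.sub_mulVec, hWx, sub_zero]
  -- padding vector
  set P := (1 : Matrix (Fin q) (Fin q) ℝ).submatrix id J' with hPdef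
  set y := P.mulVec x with hydef
  have hysq : ∑ b, (y b)^2 = ∑ a, (x a)^2 := by
    have hy0 : ∀ b ∉ Finset.univ.image J', y b = 0 := by
      intro b hb
      rw [hydef, Matrix.mulVec]
      apply Finset.sum_eq_zero
      intro a _
      have : b ≠ J' a := fun h => hb (Finset.mem_image.mpr ⟨a, Finset.mem_univ _, h.symm⟩)
      simp [hPdef, Matrix.one_apply, this]
    have hyJ : ∀ a, y (J' a) = x a := by
      intro a
      rw [hydef, Matrix.mulVec, dotProduct]
      rw [Finset.sum_eq_single a]
      · simp [hPdef, Matrix.one_apply]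
      · intro c _ hc
        have : J' a ≠ J' c := fun h => hc (hJ' h).symm
        simp [hPdef, Matrix.one_apply, this]
      · simp
    calc ∑ b, (y b)^2 = ∑ b ∈ Finset.univ.image J', (y b)^2 := by
          symm
          apply Finset.sum_subset (Finset.subset_univ _)
          intro b _ hb
          rw [hy0 b hb]; ring
      _ = ∑ a, (y (J' a))^2 := by
          rw [Finset.sum_image (fun a _ b _ h => hJ' h)]
      _ = ∑ a, (x a)^2 := by simp [hyJ]
  -- spectral bound
  have hAy : (U - V).mulVec y = ((U - V).submatrix id J').mulVec x := by
    rw [hydef, Matrix.mulVec_mulVec, ← submatrix_col_eq_mul]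
  have hrow : ∀ a, ((U - V).submatrix I' J').mulVec x a
      = (U - V).mulVec y (I' a) := by
    intro a
    rw [hAy]
    rfl
  have hS1 : ∑ a, (B.mulVec x a)^2 ≤ s^2 * ∑ a, (x a)^2 := by
    calc ∑ a, (B.mulVec x a)^2 = ∑ a, ((U - V).mulVec y (I' a))^2 := by
          refine Finset.sum_congr rfl fun a _ => ?_
          rw [hBx, hrow]
      _ = ∑ i' ∈ Finset.univ.image I', ((U - V).mulVec y i')^2 := by
          rw [Finset.sum_image (fun a _ b _ h => hI' h)]
      _ ≤ ∑ i', ((U - V).mulVec y i')^2 := by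
          apply Finset.sum_le_sum_of_subset_of_nonneg (Finset.subset_univ _)
          intro b _ _; positivity
      _ ≤ s^2 * ∑ b, (y b)^2 := sum_sq_mulVec_le _ _
      _ = s^2 * ∑ a, (x a)^2 := by rw [hysq]
  -- lower bound via B⁻¹
  have hxrec : ∀ m, x m = ∑ n, B⁻¹ m n * B.mulVec x n := by
    intro m
    have : B⁻¹.mulVec (B.mulVec x) = x := by
      rw [Matrix.mulVec_mulVec, Matrix.nonsing_inv_mul _ (isUnit_iff_ne_zero.mpr hdetB0),
        Matrix.one_mulVec]
    conv_lhs => rw [← this]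
    rfl
  have hxbd : ∀ m, |x m| ≤ |E|⁻¹ * ∑ n, |B.mulVec x n| := by
    intro m
    rw [hxrec m]
    calc |∑ n, B⁻¹ m n * B.mulVec x n| ≤ ∑ n, |B⁻¹ m n * B.mulVec x n| :=
          Finset.abs_sum_le_sum_abs _ _
      _ ≤ ∑ n, |E|⁻¹ * |B.mulVec x n| := by
          refine Finset.sum_le_sum fun n _ => ?_
          rw [abs_mul]
          exact mul_le_mul_of_nonneg_right (hBinv m n) (abs_nonneg _)
      _ = |E|⁻¹ * ∑ n, |B.mulVec x n| := by rw [Finset.mul_sum]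
  have hS2 : ∑ a, (x a)^2 ≤ ((r:ℝ)+1)^2 * (|E|⁻¹)^2 * ∑ a, (B.mulVec x a)^2 := by
    have hsum : (∑ n, |B.mulVec x n|)^2 ≤ ((r:ℝ)+1) * ∑ n, (B.mulVec x n)^2 := by
      have := sq_sum_le_card_mul_sum_sq (s := Finset.univ)
        (f := fun n => |B.mulVec x n|)
      simpa [sq_abs] using this
    calc ∑ a, (x a)^2 ≤ ∑ _a : Fin (r+1), (|E|⁻¹ * ∑ n, |B.mulVec x n|)^2 := by
          refine Finset.sum_le_sum fun a _ => ?_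
          rw [← sq_abs (x a)]
          exact pow_le_pow_left₀ (abs_nonneg _) (hxbd a) 2
      _ = ((r:ℝ)+1) * ((|E|⁻¹)^2 * (∑ n, |B.mulVec x n|)^2) := by
          rw [Finset.sum_const]
          simp only [nsmul_eq_mul, Finset.card_univ, Fintype.card_fin, mul_pow]
          push_cast
          ring
      _ ≤ ((r:ℝ)+1) * ((|E|⁻¹)^2 * (((r:ℝ)+1) * ∑ n, (B.mulVec x n)^2)) := by
          apply mul_le_mul_of_nonneg_left _ (by positivity)
          apply mul_le_mul_of_nonneg_left hsum (by positivity)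
      _ = ((r:ℝ)+1)^2 * (|E|⁻¹)^2 * ∑ a, (B.mulVec x a)^2 := by ring
  -- combine
  have hXpos : 0 < ∑ a, (x a)^2 := by
    obtain ⟨m, hm⟩ := Function.ne_iff.mp hx0
    apply Finset.sum_pos' (fun a _ => sq_nonneg _)
    exact ⟨m, Finset.mem_univ _, lt_of_le_of_ne (sq_nonneg _) (Ne.symm (pow_ne_zero 2 hm))⟩
  have hfinal : (1:ℝ) ≤ ((r:ℝ)+1)^2 * (|E|⁻¹)^2 * s^2 := by
    have h6 : ∑ a, (x a)^2 ≤ (((r:ℝ)+1)^2 * (|E|⁻¹)^2 * s^2) * ∑ a, (x a)^2 := by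
      calc ∑ a, (x a)^2 ≤ ((r:ℝ)+1)^2 * (|E|⁻¹)^2 * ∑ a, (B.mulVec x a)^2 := hS2
        _ ≤ ((r:ℝ)+1)^2 * (|E|⁻¹)^2 * (s^2 * ∑ a, (x a)^2) := by
            apply mul_le_mul_of_nonneg_left hS1 (by positivity)
        _ = (((r:ℝ)+1)^2 * (|E|⁻¹)^2 * s^2) * ∑ a, (x a)^2 := by ring
    nlinarith [h6, hXpos]
  have hkey : |E|^2 ≤ (((r:ℝ)+1) * s)^2 := by
    have h7 := mul_le_mul_of_nonneg_left hfinal (le_of_lt (pow_pos hEpos 2))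
    have h8 : |E|^2 * (|E|⁻¹)^2 = 1 := by
      field_simp
    calc |E|^2 = |E|^2 * 1 := by ring
      _ ≤ |E|^2 * (((r:ℝ)+1)^2 * (|E|⁻¹)^2 * s^2) := h7
      _ = (|E|^2 * (|E|⁻¹)^2) * (((r:ℝ)+1)^2 * s^2) := by ring
      _ = (((r:ℝ)+1) * s)^2 := by rw [h8]; ring
  nlinarith [hkey, abs_nonneg E, hrhs]
end

section
/- Let U be a real p×q matrix with rank(U) ≤ r, and let I ⊆ {1,…,p}, J ⊆ {1,…,q} be index sets of cardinality r such that the r×r submatrix Û = U(I,J) is invertible. Then the skeleton (cross) decomposition is exact: U(i,j) = U(i,J) · Û⁻¹ · U(I,j) for all i ∈ {1,…,p}, j ∈ {1,…,q}, i.e. U = U(:,J) · U(I,J)⁻¹ · U(I,:). -/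
open Matrix

lemma rank_submatrix_le_general {m n m' n' : Type*} [Fintype m] [Fintype n] [Fintype m'] [Fintype n']
    [DecidableEq m] [DecidableEq n]
    (A : Matrix m n ℝ) (f : m' → m) (g : n' → n) :
    (A.submatrix f g).rank ≤ A.rank := by
  have h : A.submatrix f g = (1 : Matrix m m ℝ).submatrix f id * A * (1 : Matrix n n ℝ).submatrix id g := by
    ext i j
    simp [Matrix.mul_apply, Matrix.submatrix, Matrix.one_apply, Finset.sum_ite_eq,
      Finset.sum_ite_eq']
  rw [h]
  calc ((1 : Matrix m m ℝ).submatrix f id * A * (1 : Matrix n n ℝ).submatrix id g).rank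
      ≤ ((1 : Matrix m m ℝ).submatrix f id * A).rank := Matrix.rank_mul_le_left _ _
    _ ≤ A.rank := Matrix.rank_mul_le_right _ _

/-- Skeleton (cross) decomposition is exact for matrices of rank at most `r`:
if `U` has rank ≤ r and the `r×r` submatrix `U(I,J)` is invertible, then
`U = U(:,J) · U(I,J)⁻¹ · U(I,:)`. -/
theorem skeleton_decomposition_exact {p q r : ℕ}
    (U : Matrix (Fin p) (Fin q) ℝ) (hrank : U.rank ≤ r)
    (I : Fin r → Fin p) (J : Fin r → Fin q)
    (hI : Function.Injective I) (hJ : Function.Injective J)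
    (hinv : IsUnit (U.submatrix I J)) :
    U = U.submatrix id J * (U.submatrix I J)⁻¹ * U.submatrix I id := by
  obtain ⟨inst⟩ := hinv.nonempty_invertible
  ext i j
  set Uh := U.submatrix I J with hUh
  -- bordered matrix
  set B' : Matrix (Fin r ⊕ Fin 1) (Fin r ⊕ Fin 1) ℝ :=
    U.submatrix (Sum.elim I (fun _ => i)) (Sum.elim J (fun _ => j)) with hB'
  have hblocks : B' = Matrix.fromBlocks Uh (U.submatrix I (fun _ : Fin 1 => j))
      (U.submatrix (fun _ : Fin 1 => i) J) (U.submatrix (fun _ : Fin 1 => i) (fun _ : Fin 1 => j)) := by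
    ext (a|a) (b|b) <;> rfl
  have hrankB' : B'.rank ≤ r := le_trans (rank_submatrix_le_general U _ _) hrank
  have hdet0 : B'.det = 0 := by
    by_contra hd
    have : IsUnit B' := B'.isUnit_iff_isUnit_det.mpr (isUnit_iff_ne_zero.mpr hd)
    have := Matrix.rank_of_isUnit B' this
    simp [Fintype.card_sum] at this
    omega
  rw [hblocks, Matrix.det_fromBlocks₁₁] at hdet0
  have hdetUh : Uh.det ≠ 0 := by
    have := Uh.isUnit_iff_isUnit_det.mp hinv
    exact isUnit_iff_ne_zero.mp this
  have h1 : (U.submatrix (fun _ : Fin 1 => i) (fun _ : Fin 1 => j) -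
      U.submatrix (fun _ : Fin 1 => i) J * ⅟Uh * U.submatrix I (fun _ : Fin 1 => j)).det = 0 := by
    rcases mul_eq_zero.mp hdet0 with h | h
    · exact absurd h hdetUh
    · exact h
  rw [Matrix.det_fin_one] at h1
  have h2 := sub_eq_zero.mp h1
  rw [Matrix.invOf_eq_nonsing_inv] at h2
  have : U i j = (U.submatrix (fun _ : Fin 1 => i) J * Uh⁻¹ * U.submatrix I (fun _ : Fin 1 => j)) 0 0 := h2
  rw [this]
  simp [Matrix.mul_apply]
end

section
/- Let c ∈ (−1,1) and let ρ_c(x,y) = (1/(2π√(1−c²))) · exp(−(x² − 2cxy + y²)/(2(1−c²))) be the bivariate standard Gaussian density with correlation c. Then for all natural numbers i and j, ∫_{ℝ²} He_i(x) He_j(y) ρ_c(x,y) dx dy = δ_{i,j} · i! · cⁱ. -/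
open MeasureTheory Real

/-- Probabilists' Hermite polynomial `He_n` evaluated at a real point. -/
noncomputable def He (n : ℕ) (x : ℝ) : ℝ :=
  Polynomial.aeval x (Polynomial.hermite n)

/-- Bivariate standard Gaussian density with correlation `c`. -/
noncomputable def gaussρ₂ (c x y : ℝ) : ℝ :=
  (2 * Real.pi * Real.sqrt (1 - c ^ 2))⁻¹ *
    Real.exp (-(x ^ 2 - 2 * c * x * y + y ^ 2) / (2 * (1 - c ^ 2)))

open Polynomial Filter

lemma integrable_eval_mul_exp (p : ℝ[X]) {b : ℝ} (hb : 0 < b) :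
    Integrable (fun x : ℝ => p.eval x * Real.exp (-b * x ^ 2)) := by
  induction p using Polynomial.induction_on' with
  | add p q hp hq => simpa [add_mul, Pi.add_def] using hp.add hq
  | monomial n a =>
    have h : Integrable (fun x : ℝ => x ^ (n : ℝ) * Real.exp (-b * x ^ 2)) :=
      integrable_rpow_mul_exp_neg_mul_sq hb (lt_of_lt_of_le neg_one_lt_zero (Nat.cast_nonneg n))
    simp_rw [Real.rpow_natCast] at h
    simpa [eval_monomial, mul_assoc, mul_comm, mul_left_comm] using h.const_mul a

lemma tendsto_pow_mul_exp_atTop (n : ℕ) {b : ℝ} (hb : 0 < b) :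
    Tendsto (fun x : ℝ => x ^ n * Real.exp (-b * x ^ 2)) atTop (nhds 0) := by
  rw [tendsto_zero_iff_abs_tendsto_zero]
  apply squeeze_zero' (Eventually.of_forall fun x => abs_nonneg _)
    (g := fun x : ℝ => x ^ (n : ℝ) * Real.exp (-b * x))
  · filter_upwards [eventually_ge_atTop (1 : ℝ)] with x hx
    have hx0 : (0:ℝ) ≤ x := le_trans zero_le_one hx
    rw [abs_mul, abs_of_nonneg (pow_nonneg hx0 n), abs_of_nonneg (Real.exp_pos _).le,
      Real.rpow_natCast]
    have hxx : x ≤ x ^ 2 := by nlinarith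
    have : Real.exp (-b * x ^ 2) ≤ Real.exp (-b * x) := by
      apply Real.exp_le_exp.2
      nlinarith [mul_le_mul_of_nonneg_left hxx hb.le]
    exact mul_le_mul_of_nonneg_left this (pow_nonneg hx0 n)
  · exact tendsto_rpow_mul_exp_neg_mul_atTop_nhds_zero _ b hb

lemma tendsto_eval_mul_exp_atTop (p : ℝ[X]) {b : ℝ} (hb : 0 < b) :
    Tendsto (fun x : ℝ => p.eval x * Real.exp (-b * x ^ 2)) atTop (nhds 0) := by
  induction p using Polynomial.induction_on' with
  | add p q hp hq => simpa [add_mul] using hp.add hq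
  | monomial n a =>
    have h := (tendsto_pow_mul_exp_atTop n hb).const_mul a
    simp only [mul_zero] at h
    simpa [eval_monomial, mul_assoc] using h

lemma tendsto_eval_mul_exp_atBot (p : ℝ[X]) {b : ℝ} (hb : 0 < b) :
    Tendsto (fun x : ℝ => p.eval x * Real.exp (-b * x ^ 2)) atBot (nhds 0) := by
  have h := (tendsto_eval_mul_exp_atTop (p.comp (-X)) hb).comp tendsto_neg_atBot_atTop
  simpa [Function.comp_def, eval_comp] using h

lemma integral_deriv_eq_zero' (f f' : ℝ → ℝ) (hderiv : ∀ x, HasDerivAt f (f' x) x)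
    (hint : Integrable f') (htop : Tendsto f atTop (nhds 0))
    (hbot : Tendsto f atBot (nhds 0)) : ∫ x, f' x = 0 := by
  have h1 : ∫ x in Set.Iic (0:ℝ), f' x = f 0 - 0 :=
    MeasureTheory.integral_Iic_of_hasDerivAt_of_tendsto' (fun x _ => hderiv x)
      hint.integrableOn hbot
  have h2 : ∫ x in Set.Ioi (0:ℝ), f' x = 0 - f 0 :=
    MeasureTheory.integral_Ioi_of_hasDerivAt_of_tendsto' (fun x _ => hderiv x)
      hint.integrableOn htop
  rw [← intervalIntegral.integral_Iic_add_Ioi (b := (0:ℝ)) hint.integrableOn hint.integrableOn,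
    h1, h2]
  ring

lemma my_ibp (u v u' v' : ℝ → ℝ) (hu : ∀ x, HasDerivAt u (u' x) x)
    (hv : ∀ x, HasDerivAt v (v' x) x)
    (h1 : Integrable (fun x => u' x * v x)) (h2 : Integrable (fun x => u x * v' x))
    (htop : Tendsto (fun x => u x * v x) atTop (nhds 0))
    (hbot : Tendsto (fun x => u x * v x) atBot (nhds 0)) :
    ∫ x, u' x * v x = - ∫ x, u x * v' x := by
  have h0 : ∫ x, (u' x * v x + u x * v' x) = 0 :=
    integral_deriv_eq_zero' (fun x => u x * v x) _ (fun x => (hu x).mul (hv x))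
      (h1.add h2) htop hbot
  rw [integral_add h1 h2] at h0
  linarith


lemma derivative_hermite (n : ℕ) :
    derivative (hermite (n + 1)) = C (n + 1 : ℤ) * hermite n := by
  induction n with
  | zero => simp [hermite_one, hermite_zero]
  | succ n ih =>
    rw [hermite_succ (n + 1), derivative_sub, derivative_mul, derivative_X, ih, hermite_succ n]
    rw [derivative_mul, derivative_C]
    push_cast
    simp only [C_add, C_1, map_ofNat, C_eq_natCast]
    ring

noncomputable def hermiteR (n : ℕ) : Polynomial ℝ :=
  (Polynomial.hermite n).map (Int.castRingHom ℝ)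

lemma He_eq_eval (n : ℕ) (x : ℝ) : He n x = (hermiteR n).eval x := by
  rw [He, hermiteR, eval_map, aeval_def, algebraMap_int_eq]

lemma derivative_hermiteR (n : ℕ) :
    derivative (hermiteR (n + 1)) = C ((n : ℝ) + 1) * hermiteR n := by
  rw [hermiteR, derivative_map, derivative_hermite, Polynomial.map_mul, map_C, ← hermiteR]
  simp

lemma He_zero_eval (x : ℝ) : He 0 x = 1 := by simp [He, hermite_zero]

lemma He_one_eval (x : ℝ) : He 1 x = x := by simp [He, hermite_one]

lemma He_succ_succ (n : ℕ) (x : ℝ) :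
    He (n + 2) x = x * He (n + 1) x - ((n : ℝ) + 1) * He n x := by
  have : hermite (n + 2) = X * hermite (n + 1) - C (n + 1 : ℤ) * hermite n := by
    rw [hermite_succ (n + 1), derivative_hermite]
  simp only [He, this, map_sub, map_mul, aeval_X, aeval_C, algebraMap_int_eq, eq_intCast, map_add, map_one, map_natCast]

lemma hasDerivAt_He_succ (n : ℕ) (x : ℝ) :
    HasDerivAt (He (n + 1)) (((n : ℝ) + 1) * He n x) x := by
  show HasDerivAt (fun x => He (n + 1) x) (((n : ℝ) + 1) * He n x) x
  have h : HasDerivAt (fun x => (hermiteR (n+1)).eval x)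
      ((derivative (hermiteR (n+1))).eval x) x := Polynomial.hasDerivAt _ x
  rw [derivative_hermiteR] at h
  simpa [He_eq_eval] using h

lemma hasDerivAt_gauss (b x : ℝ) :
    HasDerivAt (fun x : ℝ => Real.exp (-b * x ^ 2)) (-2 * b * x * Real.exp (-b * x ^ 2)) x := by
  have h : HasDerivAt (fun x : ℝ => -b * x ^ 2) (-2 * b * x) x := by
    simpa [mul_comm, mul_assoc, mul_left_comm] using ((hasDerivAt_pow 2 x).const_mul (-b))
  simpa [mul_comm] using h.exp

lemma hasDerivAt_He_mul_gauss (i : ℕ) (x : ℝ) :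
    HasDerivAt (fun x => He i x * Real.exp (-(1/2 : ℝ) * x ^ 2))
      (-(He (i + 1) x * Real.exp (-(1/2 : ℝ) * x ^ 2))) x := by
  have h1 : HasDerivAt (fun x : ℝ => He i x)
      ((derivative (hermiteR i)).eval x) x := by
    simpa [He_eq_eval] using (Polynomial.hasDerivAt (hermiteR i) x)
  have h2 := hasDerivAt_gauss (1/2) x
  have h := h1.mul h2
  refine h.congr_deriv ?_
  have hrec : He (i + 1) x = x * He i x - (derivative (hermiteR i)).eval x := by
    simp only [He_eq_eval, hermiteR, derivative_map, hermite_succ i, Polynomial.map_sub,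
      Polynomial.map_mul, map_X, eval_sub, eval_mul, eval_X]
  rw [hrec]
  ring


lemma integrable_He_gauss (n : ℕ) {b : ℝ} (hb : 0 < b) :
    Integrable (fun x => He n x * Real.exp (-b * x ^ 2)) := by
  simpa [He_eq_eval] using integrable_eval_mul_exp (hermiteR n) hb

lemma integrable_He_He_gauss (m n : ℕ) {b : ℝ} (hb : 0 < b) :
    Integrable (fun x => He m x * He n x * Real.exp (-b * x ^ 2)) := by
  simpa [He_eq_eval, eval_mul] using integrable_eval_mul_exp (hermiteR m * hermiteR n) hb

lemma tendsto_He_He_top (m n : ℕ) {b : ℝ} (hb : 0 < b) :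
    Tendsto (fun x => He m x * He n x * Real.exp (-b * x ^ 2)) atTop (nhds 0) := by
  have := tendsto_eval_mul_exp_atTop (hermiteR m * hermiteR n) hb
  exact this.congr (fun x => by simp [He_eq_eval, eval_mul])

lemma tendsto_He_He_bot (m n : ℕ) {b : ℝ} (hb : 0 < b) :
    Tendsto (fun x => He m x * He n x * Real.exp (-b * x ^ 2)) atBot (nhds 0) := by
  have := tendsto_eval_mul_exp_atBot (hermiteR m * hermiteR n) hb
  exact this.congr (fun x => by simp [He_eq_eval, eval_mul])

lemma integral_He_gauss (j : ℕ) :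
    ∫ x, He j x * Real.exp (-(1/2 : ℝ) * x ^ 2)
      = if j = 0 then Real.sqrt (2 * π) else 0 := by
  match j with
  | 0 =>
    simp only [He_zero_eval, one_mul, if_pos rfl]
    rw [integral_gaussian]
    congr 1
    field_simp
  | (m + 1) =>
    rw [if_neg (Nat.succ_ne_zero m)]
    have h := integral_deriv_eq_zero'
      (fun x => He m x * Real.exp (-(1/2 : ℝ) * x ^ 2))
      (fun x => -(He (m + 1) x * Real.exp (-(1/2 : ℝ) * x ^ 2)))
      (fun x => hasDerivAt_He_mul_gauss m x)
      ((integrable_He_gauss (m + 1) (by norm_num)).neg)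
      (by
        have := tendsto_He_He_top m 0 (b := (1/2 : ℝ)) (by norm_num)
        exact this.congr (fun x => by simp [He_zero_eval]))
      (by
        have := tendsto_He_He_bot m 0 (b := (1/2 : ℝ)) (by norm_num)
        exact this.congr (fun x => by simp [He_zero_eval]))
    rw [integral_neg] at h
    linarith

lemma integral_He_He_gauss : ∀ i j : ℕ,
    ∫ x, He i x * He j x * Real.exp (-(1/2 : ℝ) * x ^ 2)
      = if i = j then (Nat.factorial i : ℝ) * Real.sqrt (2 * π) else 0 := by
  intro i
  induction i with
  | zero =>
    intro j
    simp only [He_zero_eval, one_mul]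
    rw [integral_He_gauss j]
    by_cases hj : j = 0 <;> simp [hj, eq_comm, Nat.factorial]
  | succ k ih =>
    intro j
    match j with
    | 0 =>
      rw [if_neg (Nat.succ_ne_zero k)]
      have := integral_He_gauss (k + 1)
      rw [if_neg (Nat.succ_ne_zero k)] at this
      rw [← this]
      congr 1
      funext x
      rw [He_zero_eval]
      ring
    | (m + 1) =>
      have key := my_ibp (fun x => He k x * Real.exp (-(1/2 : ℝ) * x ^ 2)) (He (m + 1))
        (fun x => -(He (k + 1) x * Real.exp (-(1/2 : ℝ) * x ^ 2)))
        (fun x => ((m : ℝ) + 1) * He m x)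
        (fun x => hasDerivAt_He_mul_gauss k x) (fun x => hasDerivAt_He_succ m x)
        (((integrable_He_He_gauss (k + 1) (m + 1) (b := (1/2 : ℝ)) (by norm_num)).neg).congr
          (Filter.Eventually.of_forall fun x => by simp only [Pi.neg_apply]; ring))
        (((integrable_He_He_gauss k m (b := (1/2 : ℝ)) (by norm_num)).const_mul
            ((m : ℝ) + 1)).congr
          (Filter.Eventually.of_forall fun x => by ring))
        ((tendsto_He_He_top k (m + 1) (b := (1/2 : ℝ)) (by norm_num)).congr (fun x => by ring))
        ((tendsto_He_He_bot k (m + 1) (b := (1/2 : ℝ)) (by norm_num)).congr (fun x => by ring))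
      have hL : ∫ x, -(He (k + 1) x * Real.exp (-(1/2 : ℝ) * x ^ 2)) * He (m + 1) x
          = - ∫ x, He (k + 1) x * He (m + 1) x * Real.exp (-(1/2 : ℝ) * x ^ 2) := by
        rw [← integral_neg]
        congr 1; funext x; ring
      have hR : ∫ x, (He k x * Real.exp (-(1/2 : ℝ) * x ^ 2)) * (((m : ℝ) + 1) * He m x)
          = ((m : ℝ) + 1) * ∫ x, He k x * He m x * Real.exp (-(1/2 : ℝ) * x ^ 2) := by
        rw [← integral_const_mul]
        congr 1; funext x; ring
      rw [hL, hR, ih m] at key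
      have key2 : ∫ x, He (k + 1) x * He (m + 1) x * Real.exp (-(1/2 : ℝ) * x ^ 2)
          = ((m : ℝ) + 1) * (if k = m then (Nat.factorial k : ℝ) * Real.sqrt (2 * π) else 0) := by
        linarith
      rw [key2]
      by_cases hkm : k = m
      · subst hkm
        rw [if_pos rfl, if_pos rfl]
        rw [Nat.factorial_succ]
        push_cast
        ring
      · rw [if_neg hkm, if_neg (by omega : ¬ k + 1 = m + 1)]
        ring


lemma mehler (c : ℝ) (hs : 0 < 1 - c ^ 2) : ∀ (j : ℕ) (x : ℝ),
    ∫ w, He j (c * x + w) * Real.exp (-(1 / (2 * (1 - c ^ 2))) * w ^ 2)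
      = c ^ j * He j x * Real.sqrt (2 * π * (1 - c ^ 2)) := by
  have hs0 : (1 - c ^ 2) ≠ 0 := ne_of_gt hs
  have hb : 0 < 1 / (2 * (1 - c ^ 2)) := by positivity
  -- integrability of shifted hermite (or any poly) against the gaussian
  have hshift : ∀ (m : ℕ) (a : ℝ), Integrable
      (fun w => He m (a + w) * Real.exp (-(1 / (2 * (1 - c ^ 2))) * w ^ 2)) := by
    intro m a
    refine (integrable_eval_mul_exp ((hermiteR m).comp (C a + X)) hb).congr
      (Eventually.of_forall fun w => ?_)
    simp [eval_comp, ← He_eq_eval]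
  have hshift2 : ∀ (m : ℕ) (a : ℝ), Integrable
      (fun w => w * He m (a + w) * Real.exp (-(1 / (2 * (1 - c ^ 2))) * w ^ 2)) := by
    intro m a
    refine (integrable_eval_mul_exp (X * (hermiteR m).comp (C a + X)) hb).congr
      (Eventually.of_forall fun w => ?_)
    simp [eval_comp, ← He_eq_eval]
  have htopshift : ∀ (m : ℕ) (a r : ℝ), Tendsto
      (fun w => r * Real.exp (-(1 / (2 * (1 - c ^ 2))) * w ^ 2) * He m (a + w))
      atTop (nhds 0) := by
    intro m a r
    refine (tendsto_eval_mul_exp_atTop (C r * (hermiteR m).comp (C a + X)) hb).congr fun w => ?_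
    simp [eval_comp, ← He_eq_eval]
    ring
  have hbotshift : ∀ (m : ℕ) (a r : ℝ), Tendsto
      (fun w => r * Real.exp (-(1 / (2 * (1 - c ^ 2))) * w ^ 2) * He m (a + w))
      atBot (nhds 0) := by
    intro m a r
    refine (tendsto_eval_mul_exp_atBot (C r * (hermiteR m).comp (C a + X)) hb).congr fun w => ?_
    simp [eval_comp, ← He_eq_eval]
    ring
  -- the derivative of the gaussian factor, rescaled
  have hu : ∀ w : ℝ, HasDerivAt
      (fun w => -(1 - c ^ 2) * Real.exp (-(1 / (2 * (1 - c ^ 2))) * w ^ 2))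
      (w * Real.exp (-(1 / (2 * (1 - c ^ 2))) * w ^ 2)) w := by
    intro w
    have h := (hasDerivAt_gauss (1 / (2 * (1 - c ^ 2))) w).const_mul (-(1 - c ^ 2))
    refine h.congr_deriv ?_
    field_simp
  -- the derivative of the shifted hermite
  have hv : ∀ (m : ℕ) (a : ℝ) (w : ℝ), HasDerivAt (fun w => He (m + 1) (a + w))
      (((m : ℝ) + 1) * He m (a + w)) w := by
    intro m a w
    have h := (hasDerivAt_He_succ m (a + w)).comp w ((hasDerivAt_id w).const_add a)
    simpa [Function.comp_def] using h
  -- ∫ w * G w = 0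
  have hsubZ : ∫ w, w * Real.exp (-(1 / (2 * (1 - c ^ 2))) * w ^ 2) = 0 := by
    refine integral_deriv_eq_zero' _ _ hu ?_ ?_ ?_
    · refine (integrable_eval_mul_exp (X : ℝ[X]) hb).congr (Eventually.of_forall fun w => by simp)
    · exact (htopshift 0 0 (-(1 - c ^ 2))).congr fun w => by simp [He_zero_eval]
    · exact (hbotshift 0 0 (-(1 - c ^ 2))).congr fun w => by simp [He_zero_eval]
  -- key IBP step
  have hsubS : ∀ (m : ℕ) (a : ℝ),
      ∫ w, w * He (m + 1) (a + w) * Real.exp (-(1 / (2 * (1 - c ^ 2))) * w ^ 2)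
        = (1 - c ^ 2) * (((m : ℝ) + 1) *
            ∫ w, He m (a + w) * Real.exp (-(1 / (2 * (1 - c ^ 2))) * w ^ 2)) := by
    intro m a
    have key := my_ibp
      (fun w => -(1 - c ^ 2) * Real.exp (-(1 / (2 * (1 - c ^ 2))) * w ^ 2))
      (fun w => He (m + 1) (a + w))
      (fun w => w * Real.exp (-(1 / (2 * (1 - c ^ 2))) * w ^ 2))
      (fun w => ((m : ℝ) + 1) * He m (a + w))
      hu (hv m a)
      ((hshift2 (m + 1) a).congr (Eventually.of_forall fun w => by ring))
      (((hshift m a).const_mul (-(1 - c ^ 2) * ((m : ℝ) + 1))).congr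
        (Eventually.of_forall fun w => by ring))
      (htopshift (m + 1) a (-(1 - c ^ 2)))
      (hbotshift (m + 1) a (-(1 - c ^ 2)))
    calc ∫ w, w * He (m + 1) (a + w) * Real.exp (-(1 / (2 * (1 - c ^ 2))) * w ^ 2)
        = ∫ w, (w * Real.exp (-(1 / (2 * (1 - c ^ 2))) * w ^ 2)) * He (m + 1) (a + w) := by
          congr 1; funext w; ring
      _ = - ∫ w, (-(1 - c ^ 2) * Real.exp (-(1 / (2 * (1 - c ^ 2))) * w ^ 2)) *
            (((m : ℝ) + 1) * He m (a + w)) := key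
      _ = - ∫ w, (-(1 - c ^ 2) * ((m : ℝ) + 1)) *
            (He m (a + w) * Real.exp (-(1 / (2 * (1 - c ^ 2))) * w ^ 2)) := by
          congr 1
          refine integral_congr_ae (Eventually.of_forall fun w => by ring)
      _ = (1 - c ^ 2) * (((m : ℝ) + 1) *
            ∫ w, He m (a + w) * Real.exp (-(1 / (2 * (1 - c ^ 2))) * w ^ 2)) := by
          rw [integral_const_mul]; ring
  -- gaussian normalisation
  have hnorm : ∫ w, Real.exp (-(1 / (2 * (1 - c ^ 2))) * w ^ 2)
      = Real.sqrt (2 * π * (1 - c ^ 2)) := by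
    rw [integral_gaussian]
    congr 1
    field_simp
  intro j
  induction j using Nat.twoStepInduction with
  | zero =>
    intro x
    simp only [He_zero_eval, one_mul, pow_zero]
    rw [hnorm]
  | one =>
    intro x
    simp only [He_one_eval, pow_one]
    have h1 : Integrable (fun w => c * x * Real.exp (-(1 / (2 * (1 - c ^ 2))) * w ^ 2)) := by
      refine ((integrable_eval_mul_exp (1 : ℝ[X]) hb).const_mul (c * x)).congr
        (Eventually.of_forall fun w => by simp)
    have h2 : Integrable (fun w => w * Real.exp (-(1 / (2 * (1 - c ^ 2))) * w ^ 2)) := by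
      refine (integrable_eval_mul_exp (X : ℝ[X]) hb).congr (Eventually.of_forall fun w => by simp)
    calc ∫ w, (c * x + w) * Real.exp (-(1 / (2 * (1 - c ^ 2))) * w ^ 2)
        = ∫ w, (c * x * Real.exp (-(1 / (2 * (1 - c ^ 2))) * w ^ 2)
            + w * Real.exp (-(1 / (2 * (1 - c ^ 2))) * w ^ 2)) := by
          refine integral_congr_ae (Eventually.of_forall fun w => by ring)
      _ = (∫ w, c * x * Real.exp (-(1 / (2 * (1 - c ^ 2))) * w ^ 2))
            + ∫ w, w * Real.exp (-(1 / (2 * (1 - c ^ 2))) * w ^ 2) := integral_add h1 h2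
      _ = c * x * Real.sqrt (2 * π * (1 - c ^ 2)) := by
          rw [hsubZ, integral_const_mul, hnorm]; ring
  | more j ih ih1 =>
    intro x
    have hint1 : Integrable (fun w => c * x *
        (He (j + 1) (c * x + w) * Real.exp (-(1 / (2 * (1 - c ^ 2))) * w ^ 2))) :=
      (hshift (j + 1) (c * x)).const_mul _
    have hint2 : Integrable (fun w =>
        w * He (j + 1) (c * x + w) * Real.exp (-(1 / (2 * (1 - c ^ 2))) * w ^ 2)) :=
      hshift2 (j + 1) (c * x)
    have hint3 : Integrable (fun w => ((j : ℝ) + 1) *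
        (He j (c * x + w) * Real.exp (-(1 / (2 * (1 - c ^ 2))) * w ^ 2))) :=
      (hshift j (c * x)).const_mul _
    have hint12 : Integrable (fun w =>
        c * x * (He (j + 1) (c * x + w) * Real.exp (-(1 / (2 * (1 - c ^ 2))) * w ^ 2))
          + w * He (j + 1) (c * x + w) * Real.exp (-(1 / (2 * (1 - c ^ 2))) * w ^ 2)) :=
      hint1.add hint2
    calc ∫ w, He (j + 2) (c * x + w) * Real.exp (-(1 / (2 * (1 - c ^ 2))) * w ^ 2)
        = ∫ w, (c * x * (He (j + 1) (c * x + w) * Real.exp (-(1 / (2 * (1 - c ^ 2))) * w ^ 2))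
            + w * He (j + 1) (c * x + w) * Real.exp (-(1 / (2 * (1 - c ^ 2))) * w ^ 2)
            - ((j : ℝ) + 1) *
              (He j (c * x + w) * Real.exp (-(1 / (2 * (1 - c ^ 2))) * w ^ 2))) := by
          refine integral_congr_ae (Eventually.of_forall fun w => ?_)
          beta_reduce
          rw [He_succ_succ]; ring
      _ = (∫ w, c * x * (He (j + 1) (c * x + w) * Real.exp (-(1 / (2 * (1 - c ^ 2))) * w ^ 2)))
            + (∫ w, w * He (j + 1) (c * x + w) * Real.exp (-(1 / (2 * (1 - c ^ 2))) * w ^ 2))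
            - ∫ w, ((j : ℝ) + 1) *
              (He j (c * x + w) * Real.exp (-(1 / (2 * (1 - c ^ 2))) * w ^ 2)) := by
          rw [integral_sub hint12 hint3, integral_add hint1 hint2]
      _ = c * x * (c ^ (j + 1) * He (j + 1) x * Real.sqrt (2 * π * (1 - c ^ 2)))
            + (1 - c ^ 2) * (((j : ℝ) + 1) * (c ^ j * He j x * Real.sqrt (2 * π * (1 - c ^ 2))))
            - ((j : ℝ) + 1) * (c ^ j * He j x * Real.sqrt (2 * π * (1 - c ^ 2))) := by
          rw [integral_const_mul, integral_const_mul, hsubS j (c * x), ih x, ih1 x]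
      _ = c ^ (j + 2) * He (j + 2) x * Real.sqrt (2 * π * (1 - c ^ 2)) := by
          rw [He_succ_succ]; ring

/-- Mehler-type orthogonality: for a correlated bivariate standard Gaussian
density with correlation `c ∈ (−1,1)`,
`∫∫ He_i(x) He_j(y) ρ_c(x,y) dx dy = δ_{i,j} i! cⁱ`. -/



theorem hermite_correlated_orthogonality (c : ℝ) (hc : c ∈ Set.Ioo (-1 : ℝ) 1)
    (i j : ℕ) :
    (∫ x : ℝ, ∫ y : ℝ, He i x * He j y * gaussρ₂ c x y) =
      if i = j then (Nat.factorial i : ℝ) * c ^ i else 0 := by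
  obtain ⟨hc1, hc2⟩ := hc
  have hs : 0 < 1 - c ^ 2 := by nlinarith
  have hs0 : (1 - c ^ 2) ≠ 0 := ne_of_gt hs
  have hpi : (0 : ℝ) < π := Real.pi_pos
  have hsq2pi : Real.sqrt (2 * π) ≠ 0 := by positivity
  have hsq2pis : Real.sqrt (2 * π * (1 - c ^ 2)) ≠ 0 := by positivity
  -- density factorization
  have hdensity : ∀ x y : ℝ, gaussρ₂ c x y
      = ((Real.sqrt (2 * π))⁻¹ * Real.exp (-(1/2 : ℝ) * x ^ 2)) *
        ((Real.sqrt (2 * π * (1 - c ^ 2)))⁻¹ *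
          Real.exp (-(1 / (2 * (1 - c ^ 2))) * (y - c * x) ^ 2)) := by
    intro x y
    unfold gaussρ₂
    have hconst : Real.sqrt (2 * π) * Real.sqrt (2 * π * (1 - c ^ 2))
        = 2 * π * Real.sqrt (1 - c ^ 2) := by
      rw [← Real.sqrt_mul (by positivity) (2 * π * (1 - c ^ 2))]
      rw [show (2 * π) * (2 * π * (1 - c ^ 2)) = (2 * π) ^ 2 * (1 - c ^ 2) by ring]
      rw [Real.sqrt_mul (by positivity), Real.sqrt_sq (by positivity)]
    have hexp : Real.exp (-(1/2 : ℝ) * x ^ 2) *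
        Real.exp (-(1 / (2 * (1 - c ^ 2))) * (y - c * x) ^ 2)
        = Real.exp (-(x ^ 2 - 2 * c * x * y + y ^ 2) / (2 * (1 - c ^ 2))) := by
      rw [← Real.exp_add]
      congr 1
      field_simp
      ring
    calc (2 * Real.pi * Real.sqrt (1 - c ^ 2))⁻¹ *
          Real.exp (-(x ^ 2 - 2 * c * x * y + y ^ 2) / (2 * (1 - c ^ 2)))
        = (Real.sqrt (2 * π) * Real.sqrt (2 * π * (1 - c ^ 2)))⁻¹ *
          (Real.exp (-(1/2 : ℝ) * x ^ 2) *
            Real.exp (-(1 / (2 * (1 - c ^ 2))) * (y - c * x) ^ 2)) := by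
          rw [hconst, hexp]
      _ = _ := by
          rw [mul_inv]
          ring
  -- inner integral
  have inner : ∀ x : ℝ, (∫ y, He i x * He j y * gaussρ₂ c x y)
      = c ^ j * (Real.sqrt (2 * π))⁻¹ *
          (He i x * He j x * Real.exp (-(1/2 : ℝ) * x ^ 2)) := by
    intro x
    have hrw : (fun y => He i x * He j y * gaussρ₂ c x y)
        = fun y => (He i x * ((Real.sqrt (2 * π))⁻¹ * Real.exp (-(1/2 : ℝ) * x ^ 2))
            * (Real.sqrt (2 * π * (1 - c ^ 2)))⁻¹) *
            (He j y * Real.exp (-(1 / (2 * (1 - c ^ 2))) * (y - c * x) ^ 2)) := by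
      funext y
      rw [hdensity x y]
      ring
    rw [hrw, integral_const_mul]
    have hsub : (∫ y, He j y * Real.exp (-(1 / (2 * (1 - c ^ 2))) * (y - c * x) ^ 2))
        = ∫ w, He j (c * x + w) * Real.exp (-(1 / (2 * (1 - c ^ 2))) * w ^ 2) := by
      rw [← integral_add_right_eq_self
        (fun y => He j y * Real.exp (-(1 / (2 * (1 - c ^ 2))) * (y - c * x) ^ 2)) (c * x)]
      refine integral_congr_ae (Eventually.of_forall fun w => ?_)
      beta_reduce
      rw [add_sub_cancel_right, add_comm w (c * x)]
    rw [hsub, mehler c hs j x]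
    field_simp
  calc (∫ x : ℝ, ∫ y : ℝ, He i x * He j y * gaussρ₂ c x y)
      = ∫ x : ℝ, c ^ j * (Real.sqrt (2 * π))⁻¹ *
          (He i x * He j x * Real.exp (-(1/2 : ℝ) * x ^ 2)) := by
        refine integral_congr_ae (Eventually.of_forall fun x => ?_)
        exact inner x
    _ = c ^ j * (Real.sqrt (2 * π))⁻¹ *
          ∫ x, He i x * He j x * Real.exp (-(1/2 : ℝ) * x ^ 2) := integral_const_mul _ _
    _ = if i = j then (Nat.factorial i : ℝ) * c ^ i else 0 := by
        rw [integral_He_He_gauss i j]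
        by_cases h : i = j
        · subst h
          rw [if_pos rfl, if_pos rfl]
          field_simp
        · rw [if_neg h, if_neg h]
          ring
end
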